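/- Let x₁, x₂, x₃ ∈ SL(2,ℂ) satisfy the magic-manifold relations [x₁, x₃x₁⁻¹x₂] = 1 and [x₂, x₁x₂⁻¹x₃] = 1. Then [x₁⁻¹, x₂] = [x₂⁻¹, x₃] = [x₃⁻¹, x₁]. -/

import Mathlib

open Matrix MatrixGroups
open scoped commutatorElement

theorem stmt_9 (x₁ x₂ x₃ : SL(2, ℂ))
    (h1 : ⁅x₁, x₃ * x₁⁻¹ * x₂⁆ = 1)
    (h2 : ⁅x₂, x₁ * x₂⁻¹ * x₃⁆ = 1) :
    ⁅x₁⁻¹, x₂⁆ = ⁅x₂⁻¹, x₃⁆ ∧ ⁅x₂⁻¹, x₃⁆ = ⁅x₃⁻¹, x₁⁆ := by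
  have h1' : x₁ * (x₃ * x₁⁻¹ * x₂) = (x₃ * x₁⁻¹ * x₂) * x₁ :=
    commutatorElement_eq_one_iff_mul_comm.mp h1
  have h2' : x₂ * (x₁ * x₂⁻¹ * x₃) = (x₁ * x₂⁻¹ * x₃) * x₂ :=
    commutatorElement_eq_one_iff_mul_comm.mp h2
  have e1 : x₁⁻¹ * x₂ * x₁ * x₂⁻¹ = x₂⁻¹ * x₃ * x₂ * x₃⁻¹ := by
    calc x₁⁻¹ * x₂ * x₁ * x₂⁻¹ = x₁⁻¹ * (x₂ * (x₁ * x₂⁻¹ * x₃)) * x₃⁻¹ := by group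
    _ = x₁⁻¹ * ((x₁ * x₂⁻¹ * x₃) * x₂) * x₃⁻¹ := by rw [h2']
    _ = x₂⁻¹ * x₃ * x₂ * x₃⁻¹ := by group
  have e2 : x₃⁻¹ * x₁ * x₃ * x₁⁻¹ = x₁⁻¹ * x₂ * x₁ * x₂⁻¹ := by
    calc x₃⁻¹ * x₁ * x₃ * x₁⁻¹ = x₃⁻¹ * (x₁ * (x₃ * x₁⁻¹ * x₂)) * x₂⁻¹ := by group
    _ = x₃⁻¹ * ((x₃ * x₁⁻¹ * x₂) * x₁) * x₂⁻¹ := by rw [h1']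
    _ = x₁⁻¹ * x₂ * x₁ * x₂⁻¹ := by group
  have c1 : ⁅x₁⁻¹, x₂⁆ = x₁⁻¹ * x₂ * x₁ * x₂⁻¹ := by group
  have c2 : ⁅x₂⁻¹, x₃⁆ = x₂⁻¹ * x₃ * x₂ * x₃⁻¹ := by group
  have c3 : ⁅x₃⁻¹, x₁⁆ = x₃⁻¹ * x₁ * x₃ * x₁⁻¹ := by group
  exact ⟨by rw [c1, c2, e1], by rw [c2, c3, ← e1, e2]⟩
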